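/- arXiv:1412.1691 — 5 statements merged into one kernel-verified Lean document; each statement's English description precedes it below -/
import Mathlib

section
/- Let X be a D-hyperbolic geodesic metric space with basepoint pt, and define H : X × ℕ → X by H(x,n) = γ_x(n), where γ_x is a geodesic from x to pt extended to be constantly pt beyond d(x,pt). Then for all (x,m), (y,n) in X × ℕ with d(x,y) ≤ R and |m − n| ≤ R, one has d(H(x,m), H(y,n)) ≤ 4D + 2R. -/
/-- A geodesic segment from `a` to `b`, parametrized by arclength on `[0, dist a b]`. -/
def GeodesicFrom {X : Type*} [MetricSpace X] (γ : ℝ → X) (a b : X) : Prop :=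
  γ 0 = a ∧ γ (dist a b) = b ∧
    ∀ s ∈ Set.Icc 0 (dist a b), ∀ t ∈ Set.Icc 0 (dist a b), dist (γ s) (γ t) = |s - t|

/-- A geodesic metric space: any two points are joined by a geodesic segment. -/
def GeodesicSpace (X : Type*) [MetricSpace X] : Prop :=
  ∀ a b : X, ∃ γ : ℝ → X, GeodesicFrom γ a b

/-- `X` is `D`-hyperbolic: every geodesic triangle is `D`-slim. -/
def Hyperbolic (X : Type*) [MetricSpace X] (D : ℝ) : Prop :=
  ∀ x y z : X, ∀ γxy γxz γyz : ℝ → X,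
    GeodesicFrom γxy x y → GeodesicFrom γxz x z → GeodesicFrom γyz y z →
    ∀ s ∈ Set.Icc (0:ℝ) (dist x y),
      (∃ t ∈ Set.Icc (0:ℝ) (dist x z), dist (γxy s) (γxz t) ≤ D) ∨
      (∃ t ∈ Set.Icc (0:ℝ) (dist y z), dist (γxy s) (γyz t) ≤ D)

/-- On a geodesic from `a` to `b`, the distance to `b` is the remaining length. -/
lemma GeodesicFrom.dist_to_end {X : Type*} [MetricSpace X] {γ : ℝ → X} {a b : X}
    (hg : GeodesicFrom γ a b) {s : ℝ} (hs : s ∈ Set.Icc 0 (dist a b)) :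
    dist (γ s) b = dist a b - s := by
  have := hg.2.2 s hs (dist a b) ⟨dist_nonneg, le_refl _⟩
  rw [hg.2.1] at this
  rw [this, abs_sub_comm, abs_of_nonneg (by linarith [hs.2])]

/-- A geodesic extended constantly past its end is 1-Lipschitz on `[0, ∞)`. -/
lemma GeodesicFrom.lipschitz_ext {X : Type*} [MetricSpace X] {γ : ℝ → X} {a b : X}
    (hg : GeodesicFrom γ a b) (hext : ∀ t, dist a b ≤ t → γ t = b)
    {s t : ℝ} (hs : 0 ≤ s) (ht : 0 ≤ t) : dist (γ s) (γ t) ≤ |s - t| := by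
  have key : ∀ u v : ℝ, 0 ≤ u → u ≤ v → dist (γ u) (γ v) ≤ |u - v| := by
    intro u v hu huv
    rcases le_total v (dist a b) with hvd | hdv
    · exact le_of_eq (hg.2.2 u ⟨hu, huv.trans hvd⟩ v ⟨hu.trans huv, hvd⟩)
    · rcases le_total u (dist a b) with hud | hdu
      · rw [hext v hdv, hg.dist_to_end ⟨hu, hud⟩, abs_sub_comm,
          abs_of_nonneg (by linarith)]
        linarith
      · rw [hext u hdu, hext v hdv, dist_self]
        exact abs_nonneg _
  rcases le_total s t with h | h
  · exact key s t hs h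
  · rw [dist_comm, abs_sub_comm]; exact key t s ht h

/-- Key fellow-travelling estimate: the extended geodesics from `x` and `y` to `pt`,
evaluated at the same time `s ≥ 0`, are within `2D + dist x y`. -/
lemma fellow_travel {X : Type*} [MetricSpace X] {D : ℝ} (hD : 0 ≤ D)
    (hgeo : GeodesicSpace X) (hhyp : Hyperbolic X D)
    (pt : X) (γ : X → ℝ → X)
    (hγ : ∀ x, GeodesicFrom (γ x) x pt)
    (hext : ∀ x : X, ∀ t : ℝ, dist x pt ≤ t → γ x t = pt)
    (x y : X) {s : ℝ} (hs : 0 ≤ s) :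
    dist (γ x s) (γ y s) ≤ 2 * D + dist x y := by
  rcases le_total s (dist x pt) with hsd | hds
  · -- s within the geodesic from x
    obtain ⟨σ, hσ⟩ := hgeo x y
    -- reversed geodesic from pt to y
    have hγ' : GeodesicFrom (fun t => γ y (dist y pt - t)) pt y := by
      refine ⟨?_, ?_, ?_⟩
      · show γ y (dist y pt - 0) = pt
        rw [sub_zero]; exact (hγ y).2.1
      · show γ y (dist y pt - dist pt y) = y
        rw [dist_comm pt y, sub_self]; exact (hγ y).1
      · intro u hu v hv
        rw [dist_comm pt y] at hu hv
        have := (hγ y).2.2 (dist y pt - u) ⟨by linarith [hu.2], by linarith [hu.1]⟩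
          (dist y pt - v) ⟨by linarith [hv.2], by linarith [hv.1]⟩
        simp only at this ⊢
        rw [this, show (dist y pt - u) - (dist y pt - v) = v - u by ring, abs_sub_comm]
    rcases hhyp x pt y (γ x) σ (fun t => γ y (dist y pt - t)) (hγ x) hσ hγ' s ⟨hs, hsd⟩
      with ⟨t, ht, hd⟩ | ⟨t, ht, hd⟩
    · -- close to a point on the geodesic [x, y]
      have hdxσ : dist x (σ t) = t := by
        have := hσ.2.2 0 ⟨le_refl _, dist_nonneg⟩ t ht
        rw [hσ.1] at this
        rw [this, zero_sub, abs_neg, abs_of_nonneg ht.1]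
      have hσy : dist (σ t) y = dist x y - t := hσ.dist_to_end ht
      have hsx : dist x (γ x s) = s := by
        have := (hγ x).2.2 0 ⟨le_refl _, dist_nonneg⟩ s ⟨hs, hsd⟩
        rw [(hγ x).1] at this
        rw [this, zero_sub, abs_neg, abs_of_nonneg hs]
      have h1 : s ≤ t + D := by
        calc s = dist x (γ x s) := hsx.symm
          _ ≤ dist x (σ t) + dist (σ t) (γ x s) := dist_triangle _ _ _
          _ ≤ t + D := by rw [hdxσ, dist_comm]; linarith
      have hyγ : dist y (γ y s) ≤ s := by
        have := (hγ y).lipschitz_ext (hext y) (le_refl (0:ℝ)) hs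
        rw [(hγ y).1, zero_sub, abs_neg, abs_of_nonneg hs] at this
        exact this
      calc dist (γ x s) (γ y s)
          ≤ dist (γ x s) (σ t) + dist (σ t) y + dist y (γ y s) := dist_triangle4 _ _ _ _
        _ ≤ D + (dist x y - t) + s := by rw [hσy]; linarith
        _ ≤ 2 * D + dist x y := by linarith
    · -- close to a point on the geodesic from y to pt
      rw [dist_comm pt y] at ht
      set u := dist y pt - t with hu_def
      have hu : u ∈ Set.Icc 0 (dist y pt) := ⟨by linarith [ht.2], by linarith [ht.1]⟩
      have hq : dist (γ y u) pt = dist y pt - u := (hγ y).dist_to_end hu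
      have hp : dist (γ x s) pt = dist x pt - s := (hγ x).dist_to_end ⟨hs, hsd⟩
      have hd' : dist (γ x s) (γ y u) ≤ D := hd
      have habs : |dist (γ x s) pt - dist (γ y u) pt| ≤ D :=
        le_trans (abs_dist_sub_le _ _ _) hd'
      have hdd : |dist x pt - dist y pt| ≤ dist x y := abs_dist_sub_le _ _ _
      have hus : |u - s| ≤ D + dist x y := by
        rw [hp, hq] at habs
        calc |u - s|
            = |((dist x pt - s) - (dist y pt - u)) - (dist x pt - dist y pt)| := by
              ring_nf
          _ ≤ |(dist x pt - s) - (dist y pt - u)| + |dist x pt - dist y pt| :=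
              abs_sub _ _
          _ ≤ D + dist x y := add_le_add habs hdd
      have hlip : dist (γ y u) (γ y s) ≤ |u - s| :=
        (hγ y).lipschitz_ext (hext y) hu.1 hs
      calc dist (γ x s) (γ y s)
          ≤ dist (γ x s) (γ y u) + dist (γ y u) (γ y s) := dist_triangle _ _ _
        _ ≤ D + (D + dist x y) := add_le_add hd' (hlip.trans hus)
        _ = 2 * D + dist x y := by ring
  · -- s past the end of the geodesic from x
    rw [hext x s hds]
    rcases le_total (dist y pt) s with h | h
    · rw [hext y s h, dist_self]
      have := dist_nonneg (x := x) (y := y)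
      linarith
    · rw [dist_comm, (hγ y).dist_to_end ⟨hs, h⟩]
      have h1 : dist y pt ≤ dist y x + dist x pt := dist_triangle _ _ _
      rw [dist_comm y x] at h1
      linarith

/-- For `H (x, n) = γ x n` with `γ x` a geodesic from `x` to `pt` (extended constantly by
`pt` beyond `dist x pt`) in a `D`-hyperbolic geodesic space: if `dist x y ≤ R` and
`|m - n| ≤ R` then `dist (H x m) (H y n) ≤ 4 D + 2 R`. -/
theorem stmt1 {X : Type*} [MetricSpace X] (D : ℝ) (hD : 0 ≤ D)
    (hgeo : GeodesicSpace X) (hhyp : Hyperbolic X D)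
    (pt : X) (γ : X → ℝ → X)
    (hγ : ∀ x, GeodesicFrom (γ x) x pt)
    (hext : ∀ x : X, ∀ t : ℝ, dist x pt ≤ t → γ x t = pt)
    (H : X → ℕ → X) (hH : ∀ x n, H x n = γ x n)
    (R : ℝ) (hR : 0 ≤ R) (x y : X) (hxy : dist x y ≤ R)
    (m n : ℕ) (hmn : |(m : ℝ) - (n : ℝ)| ≤ R) :
    dist (H x m) (H y n) ≤ 4 * D + 2 * R := by
  rw [hH, hH]
  have h1 : dist (γ x m) (γ y m) ≤ 2 * D + dist x y :=
    fellow_travel hD hgeo hhyp pt γ hγ hext x y (Nat.cast_nonneg m)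
  have h2 : dist (γ y m) (γ y n) ≤ |(m : ℝ) - n| :=
    (hγ y).lipschitz_ext (hext y) (Nat.cast_nonneg m) (Nat.cast_nonneg n)
  calc dist (γ x (m : ℝ)) (γ y (n : ℝ))
      ≤ dist (γ x (m : ℝ)) (γ y (m : ℝ)) + dist (γ y (m : ℝ)) (γ y (n : ℝ)) :=
        dist_triangle _ _ _
    _ ≤ 4 * D + 2 * R := by linarith
end

section
/- Let Y be a compact metric space embedded in the unit sphere of a real Hilbert space H, and let OY ⊆ H be the union of all rays from the origin through points of Y (the open cone on Y), with the subspace metric. Define H : OY × ℕ → OY by H(t·y, n) = max(t − n, 0)·y for y ∈ Y, t ≥ 0. Then H((0,·)) is the cone point 0; H(x,0) = x for all x; for every bounded B ⊆ OY there is N with H(x,n) = 0 for all x ∈ B and n ≥ N; and for all x₁ = t₁·y₁, x₂ = t₂·y₂ in OY with ‖x₁ − x₂‖ ≤ R and m, n ∈ ℕ with |m − n| ≤ R, one has ‖H(x₁,m) − H(x₂,n)‖ ≤ 2R. -/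
lemma radial_key {E : Type*} [NormedAddCommGroup E] [InnerProductSpace ℝ E]
    (y₁ y₂ : E) (h₁ : ‖y₁‖ = 1) (h₂ : ‖y₂‖ = 1)
    (a b a' b' : ℝ) (ha' : 0 ≤ a') (hb' : 0 ≤ b') (haa : a' ≤ a) (hbb : b' ≤ b)
    (hd : (a' - b')^2 ≤ (a - b)^2) :
    ‖a' • y₁ - b' • y₂‖ ≤ ‖a • y₁ - b • y₂‖ := by
  have hc : |inner ℝ y₁ y₂| ≤ (1 : ℝ) := by
    have := abs_real_inner_le_norm y₁ y₂
    rwa [h₁, h₂, one_mul] at this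
  have hc1 : inner ℝ y₁ y₂ ≤ (1:ℝ) := (abs_le.mp hc).2
  rw [← Real.sqrt_sq (norm_nonneg (a' • y₁ - b' • y₂)),
      ← Real.sqrt_sq (norm_nonneg (a • y₁ - b • y₂))]
  apply Real.sqrt_le_sqrt
  have e1 : ‖a' • y₁ - b' • y₂‖^2 = a'^2 - 2*(a'*b')*(inner ℝ y₁ y₂) + b'^2 := by
    rw [norm_sub_sq_real, real_inner_smul_left, real_inner_smul_right,
        norm_smul, norm_smul, h₁, h₂]
    rw [Real.norm_of_nonneg ha', Real.norm_of_nonneg hb']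
    ring
  have e2 : ‖a • y₁ - b • y₂‖^2 = a^2 - 2*(a*b)*(inner ℝ y₁ y₂) + b^2 := by
    rw [norm_sub_sq_real, real_inner_smul_left, real_inner_smul_right,
        norm_smul, norm_smul, h₁, h₂]
    rw [Real.norm_of_nonneg (le_trans ha' haa), Real.norm_of_nonneg (le_trans hb' hbb)]
    ring
  rw [e1, e2]
  have hab : a' * b' ≤ a * b := mul_le_mul haa hbb hb' (le_trans ha' haa)
  nlinarith [mul_nonneg (sub_nonneg.mpr hc1) (sub_nonneg.mpr hab)]

/-- Let `Y` be a compact subset of the unit sphere of a real Hilbert space `E` and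
`OY = {t • y | t ≥ 0, y ∈ Y}` the open cone on `Y`.  The radial contraction
`Hc x n = (max (‖x‖ - n) 0 / ‖x‖) • x` (i.e. `t•y ↦ max (t-n) 0 • y`) fixes the cone
point `0`, is the identity at time `0`, eventually collapses every bounded subset of the
cone to `0`, and satisfies `‖Hc x₁ m - Hc x₂ n‖ ≤ 2R` whenever `‖x₁ - x₂‖ ≤ R` and
`|m - n| ≤ R`. -/
theorem stmt3 {E : Type*} [NormedAddCommGroup E] [InnerProductSpace ℝ E] [CompleteSpace E]
    (Y : Set E) (hYcp : IsCompact Y) (hYsph : Y ⊆ Metric.sphere (0 : E) 1)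
    (OY : Set E) (hOY : OY = {x | ∃ t : ℝ, 0 ≤ t ∧ ∃ y ∈ Y, x = t • y})
    (Hc : E → ℕ → E) (hHc : ∀ x n, Hc x n = (max (‖x‖ - (n : ℝ)) 0 / ‖x‖) • x) :
    (∀ n, Hc 0 n = 0) ∧
    (∀ x ∈ OY, Hc x 0 = x) ∧
    (∀ B ⊆ OY, Bornology.IsBounded B → ∃ N : ℕ, ∀ x ∈ B, ∀ n ≥ N, Hc x n = 0) ∧
    (∀ R : ℝ, ∀ t₁ t₂ : ℝ, 0 ≤ t₁ → 0 ≤ t₂ → ∀ y₁ ∈ Y, ∀ y₂ ∈ Y,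
      ‖t₁ • y₁ - t₂ • y₂‖ ≤ R → ∀ m n : ℕ, |(m : ℝ) - (n : ℝ)| ≤ R →
      ‖Hc (t₁ • y₁) m - Hc (t₂ • y₂) n‖ ≤ 2 * R) := by
  have hnorm : ∀ y ∈ Y, ‖y‖ = 1 := by
    intro y hy
    have := hYsph hy
    simpa using this
  have hrep : ∀ (t : ℝ), 0 ≤ t → ∀ y : E, ‖y‖ = 1 → ∀ n : ℕ,
      Hc (t • y) n = max (t - n) 0 • y := by
    intro t ht y hy n
    rw [hHc]
    have hn : ‖t • y‖ = t := by rw [norm_smul, hy, mul_one, Real.norm_of_nonneg ht]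
    rw [hn, smul_smul]
    rcases eq_or_lt_of_le ht with h | h
    · subst h
      have : max (0 - (n:ℝ)) 0 = 0 := max_eq_right (by simp)
      simp [this]
    · rw [div_mul_cancel₀ _ (ne_of_gt h)]
  refine ⟨?_, ?_, ?_, ?_⟩
  · intro n; rw [hHc]; simp
  · intro x _
    rw [hHc]
    rcases eq_or_ne x 0 with rfl | hx
    · simp
    · have hx' : ‖x‖ ≠ 0 := norm_ne_zero_iff.mpr hx
      rw [Nat.cast_zero, sub_zero, max_eq_left (norm_nonneg x), div_self hx', one_smul]
  · intro B _ hB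
    obtain ⟨C, hC⟩ := hB.exists_norm_le
    refine ⟨⌈C⌉₊, fun x hx n hn => ?_⟩
    rw [hHc]
    have h1 : ‖x‖ - (n : ℝ) ≤ 0 := by
      have : C ≤ (n : ℝ) := le_trans (Nat.le_ceil C) (by exact_mod_cast hn)
      linarith [hC x hx]
    rw [max_eq_right h1]
    simp
  · intro R t₁ t₂ ht₁ ht₂ y₁ hy₁ y₂ hy₂ hR m n hmn
    have h₁ := hnorm y₁ hy₁
    have h₂ := hnorm y₂ hy₂
    rw [hrep t₁ ht₁ y₁ h₁ m, hrep t₂ ht₂ y₂ h₂ n]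
    have step1 : ‖max (t₁ - m) 0 • y₁ - max (t₂ - m) 0 • y₂‖ ≤ R := by
      refine le_trans (radial_key y₁ y₂ h₁ h₂ t₁ t₂ _ _ (le_max_right _ _)
        (le_max_right _ _) ?_ ?_ ?_) hR
      · exact max_le (by linarith) ht₁
      · exact max_le (by linarith) ht₂
      · have := abs_max_sub_max_le_abs (t₁ - m) (t₂ - m) 0
        have h' : t₁ - (m:ℝ) - (t₂ - m) = t₁ - t₂ := by ring
        rw [h'] at this
        calc (max (t₁ - m) 0 - max (t₂ - m) 0)^2 = |max (t₁ - m) 0 - max (t₂ - m) 0|^2 := (sq_abs _).symm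
          _ ≤ |t₁ - t₂|^2 := by gcongr
          _ = (t₁ - t₂)^2 := sq_abs _
    have step2 : ‖max (t₂ - m) 0 • y₂ - max (t₂ - n) 0 • y₂‖ ≤ R := by
      rw [← sub_smul, norm_smul, h₂, mul_one]
      calc ‖max (t₂ - m) 0 - max (t₂ - n) 0‖ = |max (t₂ - m) 0 - max (t₂ - n) 0| := rfl
        _ ≤ |t₂ - m - (t₂ - n)| := abs_max_sub_max_le_abs _ _ _
        _ = |(m:ℝ) - n| := by rw [show t₂ - (m:ℝ) - (t₂ - n) = -((m:ℝ) - n) by ring, abs_neg]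
        _ ≤ R := hmn
    calc ‖max (t₁ - m) 0 • y₁ - max (t₂ - n) 0 • y₂‖
        ≤ ‖max (t₁ - m) 0 • y₁ - max (t₂ - m) 0 • y₂‖
          + ‖max (t₂ - m) 0 • y₂ - max (t₂ - n) 0 • y₂‖ := norm_sub_le_norm_sub_add_norm_sub _ _ _
      _ ≤ R + R := add_le_add step1 step2
      _ = 2 * R := by ring
end

section
/- Let Z be a countably generated discrete coarse space with generating entourages E₀ ⊆ E₁ ⊆ ⋯, and let H : Z × ℕ → Z be a coarse contraction to pt ∈ Z. Define H_n : P_Z → P_Z as the pushforward of finitely supported probability measures along z ↦ H(z,n), where P_{Z,n} = {μ : supp μ × supp μ ⊆ E_n}. Then for every n there is m ≥ n such that for all j ∈ ℕ and s ∈ [0,1] and μ ∈ P_{Z,n}, the measure (1−s)·H_j(μ) + s·H_{j+1}(μ) lies in P_{Z,m}. -/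
/-- A coarse structure on a set `X`: a collection of subsets of `X × X` (entourages)
containing the diagonal and all finite sets, closed under subsets, inverses,
composition and finite unions. -/
structure CoarseStruct (X : Type*) where
  ents : Set (Set (X × X))
  diag_mem : {p : X × X | p.1 = p.2} ∈ ents
  subset_mem : ∀ E ∈ ents, ∀ E' ⊆ E, E' ∈ ents
  inv_mem : ∀ E ∈ ents, {p : X × X | (p.2, p.1) ∈ E} ∈ ents
  comp_mem : ∀ E₁ ∈ ents, ∀ E₂ ∈ ents,
    {p : X × X | ∃ y, (p.1, y) ∈ E₁ ∧ (y, p.2) ∈ E₂} ∈ ents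
  union_mem : ∀ E₁ ∈ ents, ∀ E₂ ∈ ents, E₁ ∪ E₂ ∈ ents
  finite_mem : ∀ E : Set (X × X), E.Finite → E ∈ ents

/-- Composition of relations: `E₁ ∘ E₂ = {(x,z) | ∃ y, (x,y) ∈ E₁ ∧ (y,z) ∈ E₂}`. -/
def relComp {X : Type*} (E₁ E₂ : Set (X × X)) : Set (X × X) :=
  {p : X × X | ∃ y, (p.1, y) ∈ E₁ ∧ (y, p.2) ∈ E₂}

/-- A subset `B` is bounded for a coarse structure if `B × B` is an entourage. -/
def CoarseStruct.IsBoundedSet {X : Type*} (c : CoarseStruct X) (B : Set X) : Prop :=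
  B ×ˢ B ∈ c.ents

/-- A coarse map sends entourages to entourages and preimages of bounded sets
are bounded. -/
def IsCoarseMap {X Y : Type*} (cX : CoarseStruct X) (cY : CoarseStruct Y)
    (φ : X → Y) : Prop :=
  (∀ E ∈ cX.ents, (fun p : X × X => (φ p.1, φ p.2)) '' E ∈ cY.ents) ∧
  (∀ B : Set Y, cY.IsBoundedSet B → cX.IsBoundedSet (φ ⁻¹' B))

/-- Two maps are close if the image of the diagonal under `φ × ψ` is an entourage. -/
def Close {X Y : Type*} (cY : CoarseStruct Y) (φ ψ : X → Y) : Prop :=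
  Set.range (fun x => (φ x, ψ x)) ∈ cY.ents

/-- Pushforward of a finitely supported measure `μ` along `f`. -/
noncomputable def pushf {Z : Type*} (f : Z → Z) (μ : Z → ℝ) : Z → ℝ :=
  fun w => ∑ᶠ z ∈ {z | f z = w}, μ z

/-- Let `Z` be a countably generated discrete coarse space with increasing generating
entourages `E n`, and `H : Z × ℕ → Z` a coarse contraction to `pt` (it maps product
entourages to entourages, is the identity at time `0`, eventually collapses bounded
sets to `pt`, and fixes `pt`).  Writing `H_j μ` for the pushforward of a finitely
supported probability measure along `z ↦ H z j`, for every `n` there is `m ≥ n` such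
that for all `j`, `s ∈ [0,1]` and `μ` with `supp μ × supp μ ⊆ E n`, the convex
combination `(1-s)•H_j μ + s•H_{j+1} μ` lies in `P_{Z,m}`, i.e. its support square is
contained in `E m`. -/
theorem stmt12 {Z : Type*} (cZ : CoarseStruct Z) (E : ℕ → Set (Z × Z))
    (hEmem : ∀ n, E n ∈ cZ.ents) (hEmono : Monotone E)
    (hEgen : ∀ F ∈ cZ.ents, ∃ n, F ⊆ E n)
    (pt : Z) (H : Z → ℕ → Z)
    (hHent : ∀ F ∈ cZ.ents, ∀ c : ℕ,
      (fun p : (Z × ℕ) × (Z × ℕ) => (H p.1.1 p.1.2, H p.2.1 p.2.2)) ''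
        {p : (Z × ℕ) × (Z × ℕ) | (p.1.1, p.2.1) ∈ F ∧
          p.1.2 ≤ p.2.2 + c ∧ p.2.2 ≤ p.1.2 + c} ∈ cZ.ents)
    (hH0 : ∀ x, H x 0 = x)
    (hHbd : ∀ B : Set Z, cZ.IsBoundedSet B → ∃ N, ∀ x ∈ B, ∀ n ≥ N, H x n = pt)
    (hHpt : ∀ n, H pt n = pt) :
    ∀ n : ℕ, ∃ m : ℕ, n ≤ m ∧
      ∀ (j : ℕ) (s : ℝ), s ∈ Set.Icc (0:ℝ) 1 →
      ∀ μ : Z → ℝ, (Function.support μ).Finite → (∀ z, 0 ≤ μ z) → (∑ᶠ z, μ z = 1) →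
      Function.support μ ×ˢ Function.support μ ⊆ E n →
      (Function.support fun w =>
          (1 - s) * pushf (fun z => H z j) μ w + s * pushf (fun z => H z (j+1)) μ w) ×ˢ
        (Function.support fun w =>
          (1 - s) * pushf (fun z => H z j) μ w + s * pushf (fun z => H z (j+1)) μ w) ⊆
        E m := by
  intro n
  obtain ⟨m₀, hm₀⟩ := hEgen _ (hHent (E n) (hEmem n) 1)
  refine ⟨max n m₀, le_max_left _ _, ?_⟩
  intro j s hs μ hfin hpos hsum hsupp
  have key : ∀ w : Z,
      (1 - s) * pushf (fun z => H z j) μ w + s * pushf (fun z => H z (j+1)) μ w ≠ 0 →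
      ∃ z j', μ z ≠ 0 ∧ (j' = j ∨ j' = j + 1) ∧ H z j' = w := by
    intro w hw
    have : pushf (fun z => H z j) μ w ≠ 0 ∨ pushf (fun z => H z (j+1)) μ w ≠ 0 := by
      by_contra hc
      push_neg at hc
      simp [hc.1, hc.2] at hw
    rcases this with h | h
    · obtain ⟨z, hz, hμz⟩ := exists_ne_zero_of_finsum_mem_ne_zero h
      exact ⟨z, j, hμz, Or.inl rfl, hz⟩
    · obtain ⟨z, hz, hμz⟩ := exists_ne_zero_of_finsum_mem_ne_zero h
      exact ⟨z, j + 1, hμz, Or.inr rfl, hz⟩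
  rintro ⟨w₁, w₂⟩ ⟨h1, h2⟩
  obtain ⟨z₁, j₁, hz₁, hj₁, hH₁⟩ := key w₁ h1
  obtain ⟨z₂, j₂, hz₂, hj₂, hH₂⟩ := key w₂ h2
  apply hEmono (le_max_right n m₀)
  apply hm₀
  refine ⟨((z₁, j₁), (z₂, j₂)), ⟨hsupp ⟨hz₁, hz₂⟩, ?_, ?_⟩, by simp [hH₁, hH₂]⟩ <;>
    (rcases hj₁ with rfl | rfl <;> rcases hj₂ with rfl | rfl <;> dsimp only <;> omega)
end

section
/- With H and Γ as above, and with another contraction H̃ to the same point pt (with associated map Γ̃), the maps Γ and Γ̃ are both homotopic, through maps [0,1] × X → X × X preserving the subset condition (one coordinate of Γ_s(t,x) is always x, and the boundary set [0,1]×{pt} ∪ {0,1}×X is sent into X×{pt} ∪ {pt}×X), to the map (t,x) ↦ (H(H̃(x,1−2t),1−2t), x) for t ≤ 1/2 and (t,x) ↦ (x, H(H̃(x,2t−1),2t−1)) for t ≥ 1/2. -/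
open Classical in
/-- The map `Γ(t,x) = (H(x,1-2t), x)` for `t ≤ 1/2` and `(x, H(x,2t-1))` for
`t ≥ 1/2`, built from a contraction `H`. -/
noncomputable def Gam {X : Type*} (H : X × ℝ → X) : ℝ × X → X × X :=
  fun p => if p.1 ≤ 1 / 2 then (H (p.2, 1 - 2 * p.1), p.2) else (p.2, H (p.2, 2 * p.1 - 1))

open Classical in
/-- The "mixed" map `Θ(t,x) = (H(H̃(x,1-2t),1-2t), x)` for `t ≤ 1/2` and
`(x, H(H̃(x,2t-1),2t-1))` for `t ≥ 1/2`. -/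
noncomputable def Theta {X : Type*} (H Ht : X × ℝ → X) : ℝ × X → X × X :=
  fun p => if p.1 ≤ 1 / 2 then (H (Ht (p.2, 1 - 2 * p.1), 1 - 2 * p.1), p.2)
    else (p.2, H (Ht (p.2, 2 * p.1 - 1), 2 * p.1 - 1))

/-- Auxiliary: composing a map continuous on `univ ×ˢ Icc 0 1` with continuous data. -/
lemma compH_aux {X α : Type*} [TopologicalSpace X] [TopologicalSpace α] {H : X × ℝ → X}
    (hH : ContinuousOn H (Set.univ ×ˢ Set.Icc (0:ℝ) 1)) {s : Set α} {u : α → X} {v : α → ℝ}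
    (hu : ContinuousOn u s) (hv : ContinuousOn v s)
    (hr : ∀ a ∈ s, v a ∈ Set.Icc (0:ℝ) 1) :
    ContinuousOn (fun a => H (u a, v a)) s :=
  hH.comp (hu.prodMk hv) (fun a ha => ⟨Set.mem_univ _, hr a ha⟩)

/-- Auxiliary continuity lemma for the piecewise homotopies. -/
lemma contOn_piece {X : Type*} [TopologicalSpace X] (A B : ℝ × ℝ × X → X)
    (hA : ContinuousOn A ((Set.Icc (0:ℝ) 1 ×ˢ Set.Icc (0:ℝ) 1 ×ˢ (Set.univ : Set X)) ∩
      {a | a.2.1 ≤ 1/2}))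
    (hB : ContinuousOn B ((Set.Icc (0:ℝ) 1 ×ˢ Set.Icc (0:ℝ) 1 ×ˢ (Set.univ : Set X)) ∩
      {a | 1/2 ≤ a.2.1}))
    (hmid : ∀ a : ℝ × ℝ × X, a.2.1 = 1/2 → A a = a.2.2 ∧ B a = a.2.2) :
    ContinuousOn (fun a => if a.2.1 ≤ 1/2 then ((A a, a.2.2) : X × X) else (a.2.2, B a))
      (Set.Icc (0:ℝ) 1 ×ˢ Set.Icc (0:ℝ) 1 ×ˢ (Set.univ : Set X)) := by
  have hsnd : Continuous fun a : ℝ × ℝ × X => a.2.2 := continuous_snd.comp continuous_snd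
  have ht : Continuous fun a : ℝ × ℝ × X => a.2.1 := continuous_fst.comp continuous_snd
  have hfr : frontier {a : ℝ × ℝ × X | a.2.1 ≤ 1/2} ⊆ {a | a.2.1 = 1/2} :=
    frontier_le_subset_eq ht continuous_const
  apply ContinuousOn.if
  · rintro a ⟨-, ha⟩
    obtain ⟨h1, h2⟩ := hmid a (hfr ha)
    simp [h1, h2]
  · have hcl : closure {a : ℝ × ℝ × X | a.2.1 ≤ 1/2} = {a | a.2.1 ≤ 1/2} :=
      (IsClosed.preimage ht isClosed_Iic).closure_eq
    rw [hcl]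
    exact hA.prodMk hsnd.continuousOn
  · have hcl : closure {a : ℝ × ℝ × X | ¬ a.2.1 ≤ 1/2} ⊆ {a | 1/2 ≤ a.2.1} := by
      apply closure_minimal
      · intro a ha; exact le_of_lt (lt_of_not_ge ha)
      · exact IsClosed.preimage ht isClosed_Ici
    exact (hsnd.continuousOn.prodMk hB).mono (Set.inter_subset_inter_right _ hcl)

/-- Given two contractions `H`, `H̃` of `X` to the same point `pt`, both `Γ` (built
from `H`) and `Γ̃` (built from `H̃`) are homotopic to the mixed map `Θ`, through
homotopies `F` such that one coordinate of `F(r,(t,x))` is always `x` and the boundary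
set `[0,1] × {pt} ∪ {0,1} × X` is sent into `X × {pt} ∪ {pt} × X`. -/
theorem stmt14 {X : Type*} [TopologicalSpace X] (pt : X) (H Ht : X × ℝ → X)
    (hHcont : ContinuousOn H (Set.univ ×ˢ Set.Icc (0:ℝ) 1))
    (hHtcont : ContinuousOn Ht (Set.univ ×ˢ Set.Icc (0:ℝ) 1))
    (hH0 : ∀ x, H (x, 0) = x) (hH1 : ∀ x, H (x, 1) = pt)
    (hHpt : ∀ t ∈ Set.Icc (0:ℝ) 1, H (pt, t) = pt)
    (hHt0 : ∀ x, Ht (x, 0) = x) (hHt1 : ∀ x, Ht (x, 1) = pt)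
    (hHtpt : ∀ t ∈ Set.Icc (0:ℝ) 1, Ht (pt, t) = pt) :
    (∃ F : ℝ × ℝ × X → X × X,
      ContinuousOn F (Set.Icc (0:ℝ) 1 ×ˢ Set.Icc (0:ℝ) 1 ×ˢ Set.univ) ∧
      (∀ t x, F (0, t, x) = Gam H (t, x)) ∧
      (∀ t x, F (1, t, x) = Theta H Ht (t, x)) ∧
      (∀ r ∈ Set.Icc (0:ℝ) 1, ∀ t ∈ Set.Icc (0:ℝ) 1, ∀ x : X,
        ((F (r, t, x)).1 = x ∨ (F (r, t, x)).2 = x) ∧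
        (x = pt ∨ t = 0 ∨ t = 1 →
          (F (r, t, x)).1 = pt ∨ (F (r, t, x)).2 = pt))) ∧
    (∃ F : ℝ × ℝ × X → X × X,
      ContinuousOn F (Set.Icc (0:ℝ) 1 ×ˢ Set.Icc (0:ℝ) 1 ×ˢ Set.univ) ∧
      (∀ t x, F (0, t, x) = Gam Ht (t, x)) ∧
      (∀ t x, F (1, t, x) = Theta H Ht (t, x)) ∧
      (∀ r ∈ Set.Icc (0:ℝ) 1, ∀ t ∈ Set.Icc (0:ℝ) 1, ∀ x : X,
        ((F (r, t, x)).1 = x ∨ (F (r, t, x)).2 = x) ∧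
        (x = pt ∨ t = 0 ∨ t = 1 →
          (F (r, t, x)).1 = pt ∨ (F (r, t, x)).2 = pt))) := by
  classical
  constructor
  · -- F₁: from Γ (built from H) to Θ
    refine ⟨fun a => if a.2.1 ≤ 1/2 then
        (H (Ht (a.2.2, a.1 * (1 - 2 * a.2.1)), 1 - 2 * a.2.1), a.2.2)
      else (a.2.2, H (Ht (a.2.2, a.1 * (2 * a.2.1 - 1)), 2 * a.2.1 - 1)), ?_, ?_, ?_, ?_⟩
    · apply contOn_piece
      · refine compH_aux hHcont (compH_aux hHtcont
          ((continuous_snd.comp continuous_snd).continuousOn) (by fun_prop) ?_)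
          (by fun_prop) ?_
        · rintro a ⟨ha, h2⟩
          simp only [Set.mem_prod, Set.mem_Icc] at ha
          simp only [Set.mem_setOf_eq] at h2
          constructor
          · nlinarith [ha.1.1, ha.2.1.1]
          · nlinarith [ha.1.1, ha.1.2, ha.2.1.1]
        · rintro a ⟨ha, h2⟩
          simp only [Set.mem_prod, Set.mem_Icc] at ha
          simp only [Set.mem_setOf_eq] at h2
          constructor <;> [linarith [ha.2.1.1]; linarith [h2]]
      · refine compH_aux hHcont (compH_aux hHtcont
          ((continuous_snd.comp continuous_snd).continuousOn) (by fun_prop) ?_)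
          (by fun_prop) ?_
        · rintro a ⟨ha, h2⟩
          simp only [Set.mem_prod, Set.mem_Icc] at ha
          simp only [Set.mem_setOf_eq] at h2
          constructor
          · nlinarith [ha.1.1, ha.2.1.2]
          · nlinarith [ha.1.1, ha.1.2, ha.2.1.2]
        · rintro a ⟨ha, h2⟩
          simp only [Set.mem_prod, Set.mem_Icc] at ha
          simp only [Set.mem_setOf_eq] at h2
          constructor <;> linarith [ha.2.1.2]
      · intro a h
        have h1 : 1 - 2 * a.2.1 = 0 := by rw [h]; ring
        have h2 : 2 * a.2.1 - 1 = 0 := by rw [h]; ring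
        simp [h1, h2, hHt0, hH0]
    · intro t x
      by_cases h : t ≤ 1/2 <;> simp [Gam, h, hHt0]
    · intro t x
      by_cases h : t ≤ 1/2 <;> simp [Theta, h]
    · rintro r ⟨hr0, hr1⟩ t ⟨ht0, ht1⟩ x
      by_cases h : t ≤ 1/2
      · simp only [h, if_pos]
        refine ⟨Or.inr trivial, ?_⟩
        rintro (rfl | rfl | rfl)
        · left
          rw [hHtpt _ ⟨by nlinarith, by nlinarith⟩, hHpt _ ⟨by linarith, by linarith⟩]
        · left; norm_num [hH1]
        · norm_num at h
      · simp only [h, if_neg, not_false_iff]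
        refine ⟨Or.inl trivial, ?_⟩
        rintro (rfl | rfl | rfl)
        · right
          rw [hHtpt _ ⟨by nlinarith, by nlinarith⟩, hHpt _ ⟨by linarith, by linarith⟩]
        · norm_num at h
        · right; norm_num [hH1]
  · -- F₂: from Γ̃ (built from H̃) to Θ
    refine ⟨fun a => if a.2.1 ≤ 1/2 then
        (H (Ht (a.2.2, 1 - 2 * a.2.1), a.1 * (1 - 2 * a.2.1)), a.2.2)
      else (a.2.2, H (Ht (a.2.2, 2 * a.2.1 - 1), a.1 * (2 * a.2.1 - 1))), ?_, ?_, ?_, ?_⟩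
    · apply contOn_piece
      · refine compH_aux hHcont (compH_aux hHtcont
          ((continuous_snd.comp continuous_snd).continuousOn) (by fun_prop) ?_)
          (by fun_prop) ?_
        · rintro a ⟨ha, h2⟩
          simp only [Set.mem_prod, Set.mem_Icc] at ha
          simp only [Set.mem_setOf_eq] at h2
          constructor <;> [linarith [ha.2.1.1]; linarith]
        · rintro a ⟨ha, h2⟩
          simp only [Set.mem_prod, Set.mem_Icc] at ha
          simp only [Set.mem_setOf_eq] at h2
          constructor
          · nlinarith [ha.1.1, ha.2.1.1]
          · nlinarith [ha.1.1, ha.1.2, ha.2.1.1]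
      · refine compH_aux hHcont (compH_aux hHtcont
          ((continuous_snd.comp continuous_snd).continuousOn) (by fun_prop) ?_)
          (by fun_prop) ?_
        · rintro a ⟨ha, h2⟩
          simp only [Set.mem_prod, Set.mem_Icc] at ha
          simp only [Set.mem_setOf_eq] at h2
          constructor <;> linarith [ha.2.1.2]
        · rintro a ⟨ha, h2⟩
          simp only [Set.mem_prod, Set.mem_Icc] at ha
          simp only [Set.mem_setOf_eq] at h2
          constructor
          · nlinarith [ha.1.1, ha.2.1.2]
          · nlinarith [ha.1.1, ha.1.2, ha.2.1.2]
      · intro a h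
        have h1 : 1 - 2 * a.2.1 = 0 := by rw [h]; ring
        have h2 : 2 * a.2.1 - 1 = 0 := by rw [h]; ring
        simp [h1, h2, hHt0, hH0]
    · intro t x
      by_cases h : t ≤ 1/2 <;> simp [Gam, h, hH0]
    · intro t x
      by_cases h : t ≤ 1/2 <;> simp [Theta, h]
    · rintro r ⟨hr0, hr1⟩ t ⟨ht0, ht1⟩ x
      by_cases h : t ≤ 1/2
      · simp only [h, if_pos]
        refine ⟨Or.inr trivial, ?_⟩
        rintro (rfl | rfl | rfl)
        · left
          rw [hHtpt _ ⟨by linarith, by linarith⟩, hHpt _ ⟨by nlinarith, by nlinarith⟩]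
        · left; norm_num [hHt1, hHpt r ⟨hr0, hr1⟩]
        · norm_num at h
      · simp only [h, if_neg, not_false_iff]
        refine ⟨Or.inl trivial, ?_⟩
        rintro (rfl | rfl | rfl)
        · right
          rw [hHtpt _ ⟨by linarith, by linarith⟩, hHpt _ ⟨by nlinarith, by nlinarith⟩]
        · norm_num at h
        · right; norm_num [hHt1, hHpt r ⟨hr0, hr1⟩]
end

section
/- Let X be a coarsely contractible coarse space with coarse contraction H : X × ℕ → X to pt. Then the map (x,n) ↦ (H(x,n), x), restricted to the set S = {(x,n) ∈ X × ℕ : n ≤ N_{\{x\}}} (where N_{\{x\}} is minimal with H(x,m) = pt for all m ≥ N_{\{x\}}), is a coarse map from S (with the subspace coarse structure of the product X × ℕ) to X × X: it maps entourages to entourages and preimages of bounded sets are bounded. -/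
/-- Entourages of the product coarse structure built from two families of entourages:
subsets of a product `F ×' G` of entourages. -/
def prodEnts {X Y : Type*} (eX : Set (Set (X × X))) (eY : Set (Set (Y × Y))) :
    Set (Set ((X × Y) × (X × Y))) :=
  {E | ∃ F ∈ eX, ∃ G ∈ eY,
    ∀ p ∈ E, (p.1.1, p.2.1) ∈ F ∧ (p.1.2, p.2.2) ∈ G}

/-- Entourages of the metric coarse structure on `ℕ`. -/
def natEnts : Set (Set (ℕ × ℕ)) :=
  {G | ∃ c : ℕ, ∀ p ∈ G, p.1 ≤ p.2 + c ∧ p.2 ≤ p.1 + c}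

/-- Let `H : X × ℕ → X` be a coarse contraction of a coarse space `X` to `pt`, and let
`Nf x` be minimal with `H (x, m) = pt` for all `m ≥ Nf x`.  Then `(x,n) ↦ (H x n, x)`,
restricted to `S = {(x,n) | n ≤ Nf x}` with the subspace coarse structure of the
product `X × ℕ`, is a coarse map to `X × X`: it maps entourages to entourages and
preimages of bounded sets are bounded. -/
theorem stmt16 {X : Type*} (cX : CoarseStruct X) (pt : X) (H : X → ℕ → X)
    (hHent : ∀ E ∈ prodEnts cX.ents natEnts,
      (fun p : (X × ℕ) × (X × ℕ) => (H p.1.1 p.1.2, H p.2.1 p.2.2)) '' E ∈ cX.ents)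
    (hH0 : ∀ x, H x 0 = x)
    (hHbd : ∀ B : Set X, cX.IsBoundedSet B → ∃ N, ∀ x ∈ B, ∀ n ≥ N, H x n = pt)
    (hHpt : ∀ n, H pt n = pt)
    (Nf : X → ℕ)
    (hNf : ∀ x, (∀ m ≥ Nf x, H x m = pt) ∧
      ∀ N' : ℕ, (∀ m ≥ N', H x m = pt) → Nf x ≤ N')
    (S : Set (X × ℕ)) (hS : S = {p : X × ℕ | p.2 ≤ Nf p.1}) :
    (∀ E ∈ prodEnts cX.ents natEnts, E ⊆ S ×ˢ S →
      (fun p : (X × ℕ) × (X × ℕ) => ((H p.1.1 p.1.2, p.1.1), (H p.2.1 p.2.2, p.2.1)))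
          '' E ∈ prodEnts cX.ents cX.ents) ∧
    (∀ B : Set (X × X), B ×ˢ B ∈ prodEnts cX.ents cX.ents →
      (((fun p : X × ℕ => (H p.1 p.2, p.1)) ⁻¹' B ∩ S) ×ˢ
        ((fun p : X × ℕ => (H p.1 p.2, p.1)) ⁻¹' B ∩ S)) ∈ prodEnts cX.ents natEnts) := by
  subst hS
  constructor
  · intro E hE _hsub
    obtain ⟨F, hF, G, hG, hFG⟩ := hE
    refine ⟨_, hHent E ⟨F, hF, G, hG, hFG⟩, F, hF, ?_⟩
    rintro p ⟨q, hq, rfl⟩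
    exact ⟨⟨q, hq, rfl⟩, (hFG q hq).1⟩
  · intro B hB
    obtain ⟨F₁, hF₁, G₁, hG₁, h⟩ := hB
    have hB₂ : cX.IsBoundedSet (Prod.snd '' B) := by
      apply cX.subset_mem G₁ hG₁
      rintro ⟨a, b⟩ ⟨⟨u, hu, rfl⟩, ⟨v, hv, rfl⟩⟩
      exact (h (u, v) ⟨hu, hv⟩).2
    obtain ⟨N, hN⟩ := hHbd _ hB₂
    refine ⟨G₁, hG₁, {p : ℕ × ℕ | p.1 ≤ p.2 + N ∧ p.2 ≤ p.1 + N}, ⟨N, fun p hp => hp⟩, ?_⟩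
    rintro ⟨⟨x, n⟩, ⟨y, m⟩⟩ ⟨⟨hx, hxS⟩, ⟨hy, hyS⟩⟩
    have hxB : x ∈ Prod.snd '' B := ⟨_, hx, rfl⟩
    have hyB : y ∈ Prod.snd '' B := ⟨_, hy, rfl⟩
    have hnx : n ≤ N := le_trans hxS ((hNf x).2 N (fun k hk => hN x hxB k hk))
    have hmy : m ≤ N := le_trans hyS ((hNf y).2 N (fun k hk => hN y hyB k hk))
    exact ⟨(h ((H x n, x), (H y m, y)) ⟨hx, hy⟩).2,
      le_trans hnx (Nat.le_add_left N m), le_trans hmy (Nat.le_add_left N n)⟩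
end
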